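/- The combined Welford updates preserve the invariant: for any n ≥ 1, if (x̄, s²) equal the population mean and variance of x_1,...,x_{n-1} (with both set to 0 when n = 1), then after the updates x̄' = x̄ + (x_n - x̄)/n and s²' = (1 - 1/n)s² + (x_n - x̄)(x_n - x̄')/n, the pair (x̄', s²') equals the population mean and variance of x_1,...,x_n. -/

import Mathlib

/-- Population mean of `x 1, ..., x k` (equal to `0` when `k = 0`, by Lean's
division-by-zero convention). -/
noncomputable def popMean (x : ℕ → ℝ) (k : ℕ) : ℝ :=
  (∑ i ∈ Finset.Icc 1 k, x i) / k

/-- Population variance of `x 1, ..., x k` (equal to `0` when `k = 0`). -/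
noncomputable def popVar (x : ℕ → ℝ) (k : ℕ) : ℝ :=
  (∑ i ∈ Finset.Icc 1 k, (x i - popMean x k) ^ 2) / k

lemma sum_sq_expand (x : ℕ → ℝ) (F : Finset ℕ) (μ : ℝ) :
    ∑ i ∈ F, (x i - μ)^2
      = ∑ i ∈ F, (x i)^2 - 2*μ*(∑ i ∈ F, x i) + F.card * μ^2 := by
  rw [Finset.mul_sum,
    show (F.card : ℝ) * μ^2 = ∑ _i ∈ F, μ^2 by rw [Finset.sum_const]; ring,
    ← Finset.sum_sub_distrib, ← Finset.sum_add_distrib]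
  exact Finset.sum_congr rfl fun i _ => by ring

/-- The combined Welford updates preserve the invariant: for any `n ≥ 1`, if
`(xbar, s2)` are the population mean and variance of `x 1, ..., x (n-1)` (both `0`
when `n = 1`), then after the updates `xbar' = xbar + (x n - xbar)/n` and
`s2' = (1 - 1/n) s2 + (x n - xbar)(x n - xbar')/n`, the pair `(xbar', s2')` gives
the population mean and variance of `x 1, ..., x n`. -/
theorem welford_combined_update (n : ℕ) (hn : 1 ≤ n) (x : ℕ → ℝ)
    (xbar s2 xbar' s2' : ℝ)
    (hmean : xbar = popMean x (n - 1))
    (hvar : s2 = popVar x (n - 1))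
    (hmean' : xbar' = xbar + (x n - xbar) / n)
    (hvar' : s2' = (1 - 1 / (n : ℝ)) * s2 + (x n - xbar) * (x n - xbar') / n) :
    xbar' = popMean x n ∧ s2' = popVar x n := by
  obtain ⟨m, rfl⟩ : ∃ m, n = m + 1 := ⟨n - 1, (Nat.succ_pred_eq_of_pos hn).symm⟩
  simp only [Nat.add_sub_cancel] at hmean hvar
  have hins : Finset.Icc 1 (m + 1) = insert (m + 1) (Finset.Icc 1 m) := by
    exact (Finset.insert_Icc_right_eq_Icc_add_one (Nat.le_add_left 1 m)).symm
  have hnotmem : (m + 1) ∉ Finset.Icc 1 m := by simp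
  set S := ∑ i ∈ Finset.Icc 1 m, x i with hS
  set T := ∑ i ∈ Finset.Icc 1 m, (x i)^2 with hT
  have hcard : (Finset.Icc 1 m).card = m := by simp
  have hsum' : ∑ i ∈ Finset.Icc 1 (m+1), x i = x (m+1) + S := by
    rw [hins, Finset.sum_insert hnotmem]
  have hsumsq' : ∑ i ∈ Finset.Icc 1 (m+1), (x i)^2 = (x (m+1))^2 + T := by
    rw [hins, Finset.sum_insert hnotmem]
  rcases Nat.eq_zero_or_pos m with rfl | hm
  · simp only [popMean, popVar, hins] at *
    norm_num at hmean hvar hmean' hvar' ⊢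
    subst hmean hvar hmean'
    norm_num at hvar'
    constructor
    · simp
    · subst hvar'; simp
  · have hm0 : (m : ℝ) ≠ 0 := Nat.cast_ne_zero.mpr hm.ne'
    have hm1 : ((m : ℝ) + 1) ≠ 0 := by positivity
    have hcast : ((m + 1 : ℕ) : ℝ) = (m : ℝ) + 1 := by push_cast; ring
    have hmeanv : popMean x m = S / m := rfl
    have hmean1 : popMean x (m+1) = (x (m+1) + S) / ((m:ℝ)+1) := by
      rw [popMean, hsum', hcast]
    have hvarv : popVar x m = (T - 2*(S/m)*S + m*(S/m)^2) / m := by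
      rw [popVar, sum_sq_expand, hmeanv, hcard]
    have hvar1 : popVar x (m+1)
        = ((x (m+1))^2 + T - 2*((x (m+1) + S)/((m:ℝ)+1))*(x (m+1) + S)
            + ((m:ℝ)+1)*((x (m+1) + S)/((m:ℝ)+1))^2) / ((m:ℝ)+1) := by
      rw [popVar, sum_sq_expand, hsum', hsumsq', hmean1, hcast, Nat.card_Icc]
      norm_num
    subst hmean hvar hmean' hvar'
    rw [hmeanv, hvarv, hmean1, hvar1, hcast]
    constructor <;> field_simp <;> ring
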